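/- Let e₁, e₂, e₃ ∈ ℝ² satisfy e₁ + e₂ + e₃ = 0, and let R(e) = Λ(e)ᵀ Ĥ be the rigidity matrix of the triangle. Then R(e) has rank 3 if and only if e₁ and e₂ are linearly independent (i.e., the triangle is non-collinear). -/

import Mathlib

open Matrix

noncomputable section

/-- The plane `ℝ²` with the Euclidean norm. -/
abbrev E2 := EuclideanSpace ℝ (Fin 2)

/-- Oriented incidence matrix of the triangle graph. -/
def Hmat : Matrix (Fin 3) (Fin 3) ℝ := !![-1, 1, 0; 0, -1, 1; 1, 0, -1]

/-- Expanded incidence matrix `Ĥ = H ⊗ I₂`. -/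
def Hhat : Matrix (Fin 3 × Fin 2) (Fin 3 × Fin 2) ℝ :=
  Matrix.kroneckerMap (· * ·) Hmat (1 : Matrix (Fin 2) (Fin 2) ℝ)

/-- `Λ(e) ∈ ℝ^{6×3}`: block-diagonal matrix with `2×1` blocks `e₁, e₂, e₃`. -/
def Lam (e : Fin 3 → E2) : Matrix (Fin 3 × Fin 2) (Fin 3) ℝ :=
  fun p j => if p.1 = j then e j p.2 else 0

/-- The rigidity matrix `R(e) = Λ(e)ᵀ Ĥ ∈ ℝ^{3×6}`. -/
def Rmat (e : Fin 3 → E2) : Matrix (Fin 3) (Fin 3 × Fin 2) ℝ := (Lam e)ᵀ * Hhat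

/-- The rigidity function `r(e)ᵢ = ½‖eᵢ‖²`. -/
def rvec (e : Fin 3 → E2) : Fin 3 → ℝ := fun i => (1 / 2) * ‖e i‖ ^ 2

/-- The matrix `D` built from the desired shape `S̄ = (s̄₁, s̄₂, s̄₃)`. -/
def Dmat (sb : Fin 3 → ℝ) : Matrix (Fin 3) (Fin 3) ℝ :=
  !![4 * sb 0 + sb 1 + sb 2, sb 1 - sb 2, sb 2 - sb 1;
     sb 0 - sb 2, sb 0 + 4 * sb 1 + sb 2, sb 2 - sb 0;
     sb 0 - sb 1, sb 1 - sb 0, sb 0 + sb 1 + 4 * sb 2]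

/-- `s_N(e) = r(e)ᵀ D r(e)`. -/
def sN (sb : Fin 3 → ℝ) (e : Fin 3 → E2) : ℝ := rvec e ⬝ᵥ (Dmat sb *ᵥ rvec e)

/-- `s_D(e) = S̄ᵀ D r(e)`. -/
def sD (sb : Fin 3 → ℝ) (e : Fin 3 → E2) : ℝ := sb ⬝ᵥ (Dmat sb *ᵥ rvec e)

/-- The time-varying scale function `s̃*(e) = s_N(e)/s_D(e)`. -/
def stilde (sb : Fin 3 → ℝ) (e : Fin 3 → E2) : ℝ := sN sb e / sD sb e

/-- The instantaneous cost `‖R(e)ᵀ (r(e) − θ S̄)‖²` at scale `θ`. -/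
def cost (sb : Fin 3 → ℝ) (e : Fin 3 → E2) (θ : ℝ) : ℝ :=
  ((Rmat e)ᵀ *ᵥ (rvec e - θ • sb)) ⬝ᵥ ((Rmat e)ᵀ *ᵥ (rvec e - θ • sb))

/-- The control gain `M(e) = s_D² I₃ − s_D S̄ r(e)ᵀ (Dᵀ + D) + s_N S̄ S̄ᵀ D`. -/
def Mmat (sb : Fin 3 → ℝ) (e : Fin 3 → E2) : Matrix (Fin 3) (Fin 3) ℝ :=
  (sD sb e) ^ 2 • (1 : Matrix (Fin 3) (Fin 3) ℝ)
    - (sD sb e) • (vecMulVec sb (rvec e) * ((Dmat sb)ᵀ + Dmat sb))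
    + (sN sb e) • (vecMulVec sb sb * Dmat sb)

/-- `N(e) = (1/s_D²)(s_D Λ(e)(Dᵀ + D) r(e) − s_N Λ(e) Dᵀ S̄) ∈ ℝ⁶`,
the gradient of the scale function `s̃*`. -/
def Nvec (sb : Fin 3 → ℝ) (e : Fin 3 → E2) : Fin 3 × Fin 2 → ℝ :=
  (1 / (sD sb e) ^ 2) •
    ((sD sb e) • (Lam e *ᵥ (((Dmat sb)ᵀ + Dmat sb) *ᵥ rvec e))
      - (sN sb e) • (Lam e *ᵥ ((Dmat sb)ᵀ *ᵥ sb)))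

end

/-- For a closed triangle `e₁ + e₂ + e₃ = 0`, the rigidity matrix
`R(e)` has rank 3 if and only if `e₁` and `e₂` are linearly independent
(i.e., the triangle is non-collinear). -/
theorem rigidity_rank_eq_three_iff (e : Fin 3 → E2) (hsum : e 0 + e 1 + e 2 = 0) :
    (Rmat e).rank = 3 ↔ LinearIndependent ℝ ![e 0, e 1] := by
    -- Auxiliary facts
  have hR : ∀ (j : Fin 3) (pk : Fin 3 × Fin 2), Rmat e j pk = Hmat j pk.1 * e j pk.2 := by
    intro j pk
    simp [Rmat, Matrix.mul_apply, Hhat, Lam, Matrix.one_apply, Fintype.sum_prod_type,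
      Fin.sum_univ_three, Fin.sum_univ_two, mul_comm]
  have h2 : ∀ i, e 2 i = -(e 0 i + e 1 i) := by
    intro i
    have h := congrArg (fun v : E2 => v i) hsum
    simp at h
    linarith
  -- the determinant of the Gram matrix R Rᵀ
  have hdet : (Rmat e * (Rmat e)ᵀ).det =
      6 * (e 0 0 * e 1 1 - e 0 1 * e 1 0)^2 *
        ((e 0 0)^2 + (e 0 1)^2 + (e 1 0)^2 + (e 1 1)^2 + e 0 0 * e 1 0 + e 0 1 * e 1 1) := by
    rw [Matrix.det_fin_three]
    simp only [Matrix.mul_apply, Matrix.transpose_apply, Fintype.sum_prod_type,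
      Fin.sum_univ_three, Fin.sum_univ_two, hR]
    norm_num [Hmat, h2]
    simp only [Matrix.cons_val]
    ring
  -- rank of a square matrix equals its size iff the determinant is nonzero
  have hrank_iff : ∀ (A : Matrix (Fin 3) (Fin 3) ℝ), A.rank = 3 ↔ A.det ≠ 0 := by
    intro A
    constructor
    · intro h hdet0
      have hr : LinearMap.range A.mulVecLin = ⊤ := by
        apply Submodule.eq_top_of_finrank_eq
        rw [← Matrix.rank]
        simp [h]
      have hsurj : Function.Surjective A.mulVec := by
        intro v
        have := hr ▸ Submodule.mem_top (x := v) (R := ℝ)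
        rcases LinearMap.mem_range.mp this with ⟨w, hw⟩
        exact ⟨w, hw⟩
      have hu := Matrix.mulVec_surjective_iff_isUnit.mp hsurj
      exact ((Matrix.isUnit_iff_isUnit_det A).mp hu).ne_zero hdet0
    · intro h
      have : IsUnit A := (Matrix.isUnit_iff_isUnit_det A).mpr (isUnit_iff_ne_zero.mpr h)
      simpa using Matrix.rank_of_isUnit A this
  -- linear independence in coordinates
  have hli : LinearIndependent ℝ ![e 0, e 1] ↔ e 0 0 * e 1 1 - e 0 1 * e 1 0 ≠ 0 := by
    rw [LinearIndependent.pair_iff]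
    constructor
    · intro h hd
      by_cases hq : e 0 1 = 0 ∧ e 1 1 = 0
      · by_cases hp : e 0 0 = 0 ∧ e 1 0 = 0
        · have h0 : e 0 = 0 := by
            ext i
            fin_cases i <;> simp [hp.1, hq.1]
          have := h 1 0 (by simp [h0])
          norm_num at this
        · have hcomb : (e 1 0) • e 0 + (-(e 0 0)) • e 1 = 0 := by
            ext i
            fin_cases i <;> simp [hq.1, hq.2] <;> ring
          have := h _ _ hcomb
          exact hp ⟨by linarith [this.2], by linarith [this.1]⟩
      · have hcomb : (e 1 1) • e 0 + (-(e 0 1)) • e 1 = 0 := by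
          ext i
          fin_cases i <;> simp
          · linarith [hd]
          · ring
        have := h _ _ hcomb
        exact hq ⟨by linarith [this.2], by linarith [this.1]⟩
    · intro hd a b hab
      have h0 : a * e 0 0 + b * e 1 0 = 0 := by
        have := congrArg (fun v : E2 => v 0) hab
        simpa using this
      have h1 : a * e 0 1 + b * e 1 1 = 0 := by
        have := congrArg (fun v : E2 => v 1) hab
        simpa using this
      constructor
      · have ha : a * (e 0 0 * e 1 1 - e 0 1 * e 1 0) = 0 := by
          linear_combination e 1 1 * h0 - e 1 0 * h1
        exact (mul_eq_zero.mp ha).resolve_right hd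
      · have hb : b * (e 0 0 * e 1 1 - e 0 1 * e 1 0) = 0 := by
          linear_combination -(e 0 1) * h0 + e 0 0 * h1
        exact (mul_eq_zero.mp hb).resolve_right hd
  rw [← Matrix.rank_self_mul_transpose, hrank_iff, hdet, hli]
  constructor
  · intro h hK
    apply h
    rw [hK]
    ring
  · intro hK
    have hpq : e 0 0 ^ 2 + e 0 1 ^ 2 > 0 := by
      rcases eq_or_ne (e 0 0) 0 with h00 | h00
      · rcases eq_or_ne (e 0 1) 0 with h01 | h01
        · exact absurd (by rw [h00, h01]; ring) hK
        · positivity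
      · positivity
    have hT : (e 0 0)^2 + (e 0 1)^2 + (e 1 0)^2 + (e 1 1)^2 + e 0 0 * e 1 0 + e 0 1 * e 1 1 > 0 := by
      nlinarith [sq_nonneg (e 0 0 + e 1 0), sq_nonneg (e 0 1 + e 1 1),
        sq_nonneg (e 1 0), sq_nonneg (e 1 1)]
    exact mul_ne_zero (mul_ne_zero (by norm_num) (pow_ne_zero 2 hK)) (ne_of_gt hT)
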